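/- arXiv:2208.12406 — 2 statements merged into one kernel-verified Lean document; each statement's English description precedes it below -/
import Mathlib

section
/- Let q ∈ ℂ[x₁,…,x_d] have degree l, let J = ⟨q⟩, and let L ∈ ℂ[x₁,…,x_d] have lowest-degree nonvanishing monomial of degree l. If ker L(D) ∩ J = {0}, then ℂ[x₁,…,x_d] = ker L(D) ⊕ J as vector spaces; moreover, for each n the restriction to degree ≤ n gives ℂ_{≤n}[x] = (ker L(D) ∩ ℂ_{≤n}[x]) ⊕ (J ∩ ℂ_{≤n}[x]). -/
open MvPolynomial

/-- The constant-coefficient differential operator `L(D)` obtained from a polynomial `L`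
by substituting `∂/∂xⱼ` for `xⱼ`. -/
noncomputable def diffOp {d : ℕ} (L : MvPolynomial (Fin d) ℂ) :
    MvPolynomial (Fin d) ℂ →ₗ[ℂ] MvPolynomial (Fin d) ℂ :=
  ∑ α ∈ L.support, L.coeff α •
    ((List.finRange d).map
      (fun j => ((pderiv j).toLinearMap : Module.End ℂ (MvPolynomial (Fin d) ℂ)) ^ (α j))).prod

/-- The lowest-degree non-vanishing monomial of `L` has degree `l`. -/
def lowestDegree {d : ℕ} (L : MvPolynomial (Fin d) ℂ) (l : ℕ) : Prop :=
  (∀ k < l, homogeneousComponent k L = 0) ∧ homogeneousComponent l L ≠ 0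

section Aux

open Module

variable {d : ℕ}

variable {d : ℕ}

lemma sub_single_sum (v : Fin d →₀ ℕ) (j : Fin d) (hvj : v j ≠ 0) :
    ((v - Finsupp.single j 1 : Fin d →₀ ℕ).sum fun _ e => e) + 1 = v.sum fun _ e => e := by
  rw [Finsupp.sum_fintype _ _ (fun _ => rfl), Finsupp.sum_fintype _ _ (fun _ => rfl),
    ← Finset.add_sum_erase _ _ (Finset.mem_univ j), ← Finset.add_sum_erase _ _ (Finset.mem_univ j)]
  have h1 : (v - Finsupp.single j 1 : Fin d →₀ ℕ) j = v j - 1 := by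
    rw [Finsupp.tsub_apply, Finsupp.single_eq_same]
  have h2 : ∀ i ∈ Finset.univ.erase j, (v - Finsupp.single j 1 : Fin d →₀ ℕ) i = v i := by
    intro i hi
    rw [Finsupp.tsub_apply, Finsupp.single_eq_of_ne' (Finset.ne_of_mem_erase hi).symm, Nat.sub_zero]
  rw [h1, Finset.sum_congr rfl h2]
  have hh : (Finset.univ.erase j).sum ⇑v = ∑ x ∈ Finset.univ.erase j, v x := rfl
  omega

lemma pderiv_as_sum (j : Fin d) (f : MvPolynomial (Fin d) ℂ) :
    pderiv j f = ∑ v ∈ f.support, monomial (v - Finsupp.single j 1) (coeff v f * v j) := by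
  conv_lhs => rw [f.as_sum]
  rw [map_sum]
  simp [pderiv_monomial]

lemma step_lemma (j : Fin d) (f : MvPolynomial (Fin d) ℂ) :
    pderiv j f = 0 ∨ (pderiv j f).totalDegree + 1 ≤ f.totalDegree := by
  by_cases h0 : ∀ v ∈ f.support, v j = 0
  · left
    rw [pderiv_as_sum]
    refine Finset.sum_eq_zero fun v hv => ?_
    rw [h0 v hv]
    simp
  · right
    push_neg at h0
    obtain ⟨w, hw, hwj⟩ := h0
    have hdegf : 1 ≤ f.totalDegree := by
      have := le_totalDegree hw
      have h2 : 1 ≤ w.sum fun _ e => e := by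
        rw [Finsupp.sum_fintype _ _ (fun _ => rfl)]
        calc 1 ≤ w j := Nat.one_le_iff_ne_zero.mpr hwj
        _ ≤ _ := Finset.single_le_sum (f := fun i => w i) (fun _ _ => Nat.zero_le _) (Finset.mem_univ j)
      omega
    have hbound : (pderiv j f).totalDegree ≤ f.totalDegree - 1 := by
      rw [pderiv_as_sum]
      refine (totalDegree_finset_sum _ _).trans (Finset.sup_le fun v hv => ?_)
      by_cases hvj : v j = 0
      · rw [hvj]; simp
      · refine (totalDegree_monomial_le _ _).trans ?_
        have h1 := sub_single_sum v j hvj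
        have h2 := le_totalDegree hv
        have h3 : ((v - Finsupp.single j 1 : Fin d →₀ ℕ).sum fun _ ↦ id) =
            ((v - Finsupp.single j 1 : Fin d →₀ ℕ).sum fun _ e => e) := rfl
        omega
    omega

lemma pow_lemma (j : Fin d) (k : ℕ) (f : MvPolynomial (Fin d) ℂ) :
    (((pderiv j).toLinearMap : Module.End ℂ (MvPolynomial (Fin d) ℂ)) ^ k) f = 0 ∨
    ((((pderiv j).toLinearMap : Module.End ℂ (MvPolynomial (Fin d) ℂ)) ^ k) f).totalDegree + k
      ≤ f.totalDegree := by
  induction k generalizing f with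
  | zero => right; simpa using le_refl f.totalDegree
  | succ k ih =>
    rw [pow_succ, Module.End.mul_apply,
      show ((pderiv j).toLinearMap : Module.End ℂ (MvPolynomial (Fin d) ℂ)) f = pderiv j f from rfl]
    rcases step_lemma j f with h | h
    · left
      rw [h, map_zero]
    · rcases ih (pderiv j f) with h2 | h2
      · left; exact h2
      · right; omega

lemma list_lemma (α : Fin d →₀ ℕ) (s : List (Fin d)) (f : MvPolynomial (Fin d) ℂ) :
    ((s.map fun j => ((pderiv j).toLinearMap : Module.End ℂ (MvPolynomial (Fin d) ℂ)) ^ (α j)).prod) f = 0 ∨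
    (((s.map fun j => ((pderiv j).toLinearMap : Module.End ℂ (MvPolynomial (Fin d) ℂ)) ^ (α j)).prod) f).totalDegree
      + (s.map fun j => α j).sum ≤ f.totalDegree := by
  induction s generalizing f with
  | nil => right; simpa using le_refl f.totalDegree
  | cons j t ih =>
    rw [List.map_cons, List.prod_cons, Module.End.mul_apply, List.map_cons, List.sum_cons]
    rcases ih f with h | h
    · left; rw [h, map_zero]
    · rcases pow_lemma j (α j) ((t.map fun j => ((pderiv j).toLinearMap : Module.End ℂ (MvPolynomial (Fin d) ℂ)) ^ (α j)).prod f) with h2 | h2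
      · left; exact h2
      · right; omega

lemma diffOp_apply (L f : MvPolynomial (Fin d) ℂ) :
    diffOp L f = ∑ α ∈ L.support, L.coeff α •
      ((List.finRange d).map
        (fun j => ((pderiv j).toLinearMap : Module.End ℂ (MvPolynomial (Fin d) ℂ)) ^ (α j))).prod f := by
  rw [diffOp, LinearMap.sum_apply]
  simp [LinearMap.smul_apply]

lemma degree_eq_listsum (α : Fin d →₀ ℕ) :
    α.degree = ((List.finRange d).map fun j => α j).sum := by
  rw [← Fin.sum_univ_def, Finsupp.degree]
  exact Finset.sum_subset (Finset.subset_univ _)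
    (fun x _ hx => Finsupp.notMem_support_iff.mp hx)

lemma support_deg_ge {l : ℕ} {L : MvPolynomial (Fin d) ℂ}
    (hL1 : ∀ k < l, homogeneousComponent k L = 0) {α : Fin d →₀ ℕ} (hα : α ∈ L.support) :
    l ≤ ((List.finRange d).map fun j => α j).sum := by
  by_contra h
  push_neg at h
  rw [← degree_eq_listsum] at h
  have h0 := congrArg (coeff α) (hL1 _ h)
  rw [coeff_homogeneousComponent, if_pos rfl, coeff_zero] at h0
  exact (mem_support_iff.mp hα) h0

lemma diffOp_mem {l : ℕ} {L : MvPolynomial (Fin d) ℂ}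
    (hL1 : ∀ k < l, homogeneousComponent k L = 0) {f : MvPolynomial (Fin d) ℂ} {n : ℕ}
    (hf : f.totalDegree ≤ n) :
    diffOp L f ∈ restrictTotalDegree (Fin d) ℂ (n - l) := by
  rw [diffOp_apply]
  refine Submodule.sum_mem _ fun α hα => Submodule.smul_mem _ _ ?_
  rcases list_lemma α (List.finRange d) f with h | h
  · rw [h]; exact Submodule.zero_mem _
  · rw [mem_restrictTotalDegree]
    have := support_deg_ge hL1 hα
    omega

lemma diffOp_eq_zero {l : ℕ} {L : MvPolynomial (Fin d) ℂ}
    (hL1 : ∀ k < l, homogeneousComponent k L = 0) {f : MvPolynomial (Fin d) ℂ}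
    (hf : f.totalDegree < l) : diffOp L f = 0 := by
  rw [diffOp_apply]
  refine Finset.sum_eq_zero fun α hα => ?_
  rcases list_lemma α (List.finRange d) f with h | h
  · rw [h, smul_zero]
  · have := support_deg_ge hL1 hα
    omega

end Aux

open Module

theorem kernel_ideal_direct_sum {d l : ℕ} (q : MvPolynomial (Fin d) ℂ) (hq0 : q ≠ 0)
    (hqdeg : q.totalDegree = l)
    (L : MvPolynomial (Fin d) ℂ) (hL : lowestDegree L l)
    (hker : ∀ f : MvPolynomial (Fin d) ℂ, diffOp L f = 0 → f ∈ Ideal.span {q} → f = 0) :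
    IsCompl (LinearMap.ker (diffOp L)) ((Ideal.span {q}).restrictScalars ℂ) ∧
    ∀ n : ℕ,
      (LinearMap.ker (diffOp L) ⊓ restrictTotalDegree (Fin d) ℂ n) ⊔
          ((Ideal.span {q}).restrictScalars ℂ ⊓ restrictTotalDegree (Fin d) ℂ n) =
        restrictTotalDegree (Fin d) ℂ n ∧
      Disjoint (LinearMap.ker (diffOp L) ⊓ restrictTotalDegree (Fin d) ℂ n)
        ((Ideal.span {q}).restrictScalars ℂ ⊓ restrictTotalDegree (Fin d) ℂ n) := by
  obtain ⟨hL1, -⟩ := hL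
  set K := LinearMap.ker (diffOp L) with hKdef
  set J' := (Ideal.span {q}).restrictScalars ℂ with hJdef
  have hdisj : Disjoint K J' := by
    rw [disjoint_iff_inf_le]
    intro x hx
    rw [Submodule.mem_inf] at hx
    rw [Submodule.mem_bot]
    exact hker x (LinearMap.mem_ker.mp hx.1) hx.2
  have key : ∀ n, (K ⊓ restrictTotalDegree (Fin d) ℂ n) ⊔ (J' ⊓ restrictTotalDegree (Fin d) ℂ n)
      = restrictTotalDegree (Fin d) ℂ n := by
    intro n
    rcases lt_or_ge n l with hn | hn
    · have hKn : restrictTotalDegree (Fin d) ℂ n ≤ K := by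
        intro f hf
        rw [hKdef, LinearMap.mem_ker]
        exact diffOp_eq_zero hL1
          (lt_of_le_of_lt ((mem_restrictTotalDegree _ _ _).mp hf) hn)
      rw [inf_eq_right.mpr hKn]
      exact sup_eq_left.mpr inf_le_right
    · set Rn := restrictTotalDegree (Fin d) ℂ n with hRn
      set Rm := restrictTotalDegree (Fin d) ℂ (n - l) with hRm
      let T : Rn →ₗ[ℂ] Rm := LinearMap.codRestrict Rm ((diffOp L).comp Rn.subtype)
        (fun x => diffOp_mem hL1 ((mem_restrictTotalDegree _ _ _).mp x.2))
      have hkerT : LinearMap.ker T = Submodule.comap Rn.subtype K := by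
        rw [LinearMap.ker_codRestrict, LinearMap.ker_comp]
      have h1 : finrank ℂ Rn ≤ finrank ℂ Rm + finrank ℂ ↥(LinearMap.ker T) := by
        have e1 := LinearMap.finrank_range_add_finrank_ker T
        have e2 := Submodule.finrank_le (LinearMap.range T)
        omega
      have h2 : finrank ℂ ↥(K ⊓ Rn) = finrank ℂ ↥(LinearMap.ker T) := by
        have e1 : Submodule.map Rn.subtype (Submodule.comap Rn.subtype K) = K ⊓ Rn := by
          rw [Submodule.map_comap_subtype, inf_comm]
        rw [hkerT, ← e1, Submodule.finrank_map_subtype_eq]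
      have hMmem : ∀ x : Rm, q * (x : MvPolynomial (Fin d) ℂ) ∈ J' ⊓ Rn := by
        intro x
        rw [Submodule.mem_inf]
        constructor
        · exact Ideal.mem_span_singleton.mpr (dvd_mul_right q x)
        · rw [hRn, mem_restrictTotalDegree]
          have e1 := totalDegree_mul q (x : MvPolynomial (Fin d) ℂ)
          have e2 := (mem_restrictTotalDegree _ _ _).mp x.2
          omega
      let M : Rm →ₗ[ℂ] ↥(J' ⊓ Rn) :=
        LinearMap.codRestrict _ ((LinearMap.mulLeft ℂ q).comp Rm.subtype) hMmem
      have hMinj : Function.Injective M := by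
        intro x y hxy
        have e1 : q * (x : MvPolynomial (Fin d) ℂ) = q * (y : MvPolynomial (Fin d) ℂ) :=
          congrArg Subtype.val hxy
        exact Subtype.ext (mul_left_cancel₀ hq0 e1)
      haveI : FiniteDimensional ℂ ↥(J' ⊓ Rn) := Submodule.finiteDimensional_of_le inf_le_right
      haveI : FiniteDimensional ℂ ↥(K ⊓ Rn) := Submodule.finiteDimensional_of_le inf_le_right
      have h3 : finrank ℂ Rm ≤ finrank ℂ ↥(J' ⊓ Rn) :=
        LinearMap.finrank_le_finrank_of_injective hMinj
      have hdn : Disjoint (K ⊓ Rn) (J' ⊓ Rn) := hdisj.mono inf_le_left inf_le_left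
      have h4 : finrank ℂ ↥((K ⊓ Rn) ⊔ (J' ⊓ Rn))
          = finrank ℂ ↥(K ⊓ Rn) + finrank ℂ ↥(J' ⊓ Rn) := by
        have e1 := Submodule.finrank_sup_add_finrank_inf_eq (K ⊓ Rn) (J' ⊓ Rn)
        rw [hdn.eq_bot] at e1
        simpa using e1
      have h5 : (K ⊓ Rn) ⊔ (J' ⊓ Rn) ≤ Rn := sup_le inf_le_right inf_le_right
      exact Submodule.eq_of_le_of_finrank_le h5 (by omega)
  have hcodis : Codisjoint K J' := by
    rw [codisjoint_iff_le_sup]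
    intro f _
    have hf : f ∈ restrictTotalDegree (Fin d) ℂ f.totalDegree :=
      (mem_restrictTotalDegree _ _ _).mpr le_rfl
    rw [← key f.totalDegree] at hf
    have hle : (K ⊓ restrictTotalDegree (Fin d) ℂ f.totalDegree) ⊔
        (J' ⊓ restrictTotalDegree (Fin d) ℂ f.totalDegree) ≤ K ⊔ J' :=
      sup_le_sup inf_le_left inf_le_left
    exact hle hf
  exact ⟨⟨hdisj, hcodis⟩, fun n => ⟨key n, hdisj.mono inf_le_left inf_le_left⟩⟩
end

section
/- Let L be a homogeneous polynomial of degree l in d variables and let F_k := {F ∈ H_k : ⟨f, F⟩ = 0 for all f ∈ J^∧ ∩ H_k}, where J = ⟨q⟩ with q^∧ = L. Then F_k = ker L̄(D) ∩ H_k; in particular dim(ker L̄(D) ∩ H_k) = dim H_k − dim H_{k−l}. -/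
open MvPolynomial

/-- The polynomial with complex-conjugated coefficients. -/
noncomputable def conjPoly {d : ℕ} (L : MvPolynomial (Fin d) ℂ) : MvPolynomial (Fin d) ℂ :=
  MvPolynomial.map (starRingEnd ℂ) L

/-- The Fischer (apolar) pairing `⟨f, L⟩ = L̄(D) f`. -/
noncomputable def fischer {d : ℕ} (f L : MvPolynomial (Fin d) ℂ) : MvPolynomial (Fin d) ℂ :=
  diffOp (conjPoly L) f

namespace FischerAux

open Finsupp

variable {d : ℕ}

/-- `∂^α` as an endomorphism. -/
noncomputable def Dop (α : Fin d →₀ ℕ) : Module.End ℂ (MvPolynomial (Fin d) ℂ) :=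
  ((List.finRange d).map
      (fun j => ((pderiv j).toLinearMap : Module.End ℂ (MvPolynomial (Fin d) ℂ)) ^ (α j))).prod

lemma diffOp_def (L : MvPolynomial (Fin d) ℂ) :
    diffOp L = ∑ α ∈ L.support, L.coeff α • Dop α := rfl

lemma nat_fact_desc (n : ℕ) : ∀ m : ℕ, n.factorial * (n + m).descFactorial m = (n + m).factorial
  | 0 => by simp
  | (m + 1) => by
    have h : n + (m + 1) = (n + m) + 1 := rfl
    rw [h, Nat.succ_descFactorial_succ, Nat.factorial_succ, ← mul_assoc,
      mul_comm n.factorial (n + m + 1), mul_assoc, nat_fact_desc n m]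

lemma pow_pderiv_monomial (j : Fin d) (n : ℕ) (β : Fin d →₀ ℕ) (c : ℂ) :
    (((pderiv j).toLinearMap : Module.End ℂ (MvPolynomial (Fin d) ℂ)) ^ n) (monomial β c) =
      monomial (β - Finsupp.single j n) (c * (β j).descFactorial n) := by
  induction n with
  | zero => simp
  | succ n ih =>
    rw [pow_succ', Module.End.mul_apply, ih]
    have h1 : ((pderiv j).toLinearMap : Module.End ℂ (MvPolynomial (Fin d) ℂ))
        (monomial (β - Finsupp.single j n) (c * ((β j).descFactorial n : ℂ)))
        = monomial (β - Finsupp.single j n - Finsupp.single j 1)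
            ((c * ((β j).descFactorial n : ℂ)) * (((β - Finsupp.single j n) j : ℕ) : ℂ)) := by
      simp [pderiv_monomial]
    rw [h1]
    have hβ : β - Finsupp.single j n - Finsupp.single j 1 = β - Finsupp.single j (n + 1) := by
      ext a
      simp only [Finsupp.tsub_apply, Finsupp.single_apply]
      by_cases h : j = a
      · subst h; simp; omega
      · simp [h]
    have hc2 : (β - Finsupp.single j n) j = β j - n := by
      simp [Finsupp.tsub_apply]
    rw [hβ, hc2]
    congr 1
    rw [Nat.descFactorial_succ]
    push_cast
    ring

lemma sum_single_apply_eq_zero (α : Fin d →₀ ℕ) (j : Fin d) :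
    ∀ t : List (Fin d), j ∉ t → ((t.map fun a => Finsupp.single a (α a)).sum) j = 0
  | [], _ => rfl
  | (a :: t), h => by
    simp only [List.map_cons, List.sum_cons, Finsupp.add_apply]
    rw [Finsupp.single_apply, if_neg (by intro e; subst e; exact h (List.mem_cons_self)),
      sum_single_apply_eq_zero α j t (fun ht => h (List.mem_cons_of_mem a ht))]

lemma list_prod_pderiv_monomial (α β : Fin d →₀ ℕ) (c : ℂ) :
    ∀ ls : List (Fin d), ls.Nodup →
      ((ls.map fun j =>
          ((pderiv j).toLinearMap : Module.End ℂ (MvPolynomial (Fin d) ℂ)) ^ (α j)).prod)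
          (monomial β c)
        = monomial (β - (ls.map fun j => Finsupp.single j (α j)).sum)
            (c * ((ls.map fun j => (β j).descFactorial (α j)).prod : ℕ))
  | [], _ => by simp
  | (j :: t), hnd => by
    obtain ⟨hjt, hndt⟩ := List.nodup_cons.mp hnd
    simp only [List.map_cons, List.prod_cons, List.sum_cons]
    rw [Module.End.mul_apply, list_prod_pderiv_monomial α β c t hndt, pow_pderiv_monomial]
    have hβj : (β - (t.map fun a => Finsupp.single a (α a)).sum) j = β j := by
      rw [Finsupp.tsub_apply, sum_single_apply_eq_zero α j t hjt, Nat.sub_zero]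
    rw [hβj, tsub_tsub, add_comm ((t.map fun a => Finsupp.single a (α a)).sum)]
    congr 1
    push_cast
    ring

lemma Dop_monomial (α β : Fin d →₀ ℕ) (c : ℂ) :
    Dop α (monomial β c) = monomial (β - α) (c * (∏ j, (β j).descFactorial (α j) : ℕ)) := by
  rw [Dop, list_prod_pderiv_monomial α β c _ (List.nodup_finRange d)]
  rw [← Fin.sum_univ_def fun j => Finsupp.single j (α j), Finsupp.univ_sum_single,
    ← Fin.prod_univ_def fun j => (β j).descFactorial (α j)]

lemma coeff_Dop (α : Fin d →₀ ℕ) (f : MvPolynomial (Fin d) ℂ) (β : Fin d →₀ ℕ) :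
    coeff β (Dop α f) = coeff (β + α) f * (∏ j, (β j + α j).descFactorial (α j) : ℕ) := by
  classical
  induction f using MvPolynomial.induction_on' with
  | monomial γ c =>
    rw [Dop_monomial, coeff_monomial, coeff_monomial]
    by_cases h : γ = β + α
    · subst h
      rw [if_pos (by rw [add_tsub_cancel_right]), if_pos rfl]
      congr 2
    · rw [if_neg h, zero_mul]
      by_cases h2 : γ - α = β
      · rw [if_pos h2]
        have hex : ∃ j, γ j < α j := by
          by_contra hno
          push_neg at hno
          apply h
          have hle : α ≤ γ := Finsupp.le_def.mpr hno
          rw [← h2, tsub_add_cancel_of_le hle]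
        obtain ⟨j, hj⟩ := hex
        have hz : (∏ j, (γ j).descFactorial (α j)) = 0 :=
          Finset.prod_eq_zero (Finset.mem_univ j) (Nat.descFactorial_eq_zero_iff_lt.mpr hj)
        rw [hz]
        simp
      · rw [if_neg h2]
  | add p q hp hq =>
    rw [map_add, coeff_add, coeff_add, hp, hq, add_mul]

lemma diffOp_apply' (L f : MvPolynomial (Fin d) ℂ) :
    diffOp L f = ∑ α ∈ L.support, L.coeff α • Dop α f := by
  rw [diffOp_def, LinearMap.sum_apply]
  simp [LinearMap.smul_apply]

lemma coeff_diffOp (L f : MvPolynomial (Fin d) ℂ) (β : Fin d →₀ ℕ) :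
    coeff β (diffOp L f) =
      ∑ α ∈ L.support,
        L.coeff α * (coeff (β + α) f * (∏ j, (β j + α j).descFactorial (α j) : ℕ)) := by
  rw [diffOp_apply', coeff_sum]
  exact Finset.sum_congr rfl fun α _ => by rw [coeff_smul, smul_eq_mul, coeff_Dop]

lemma diffOp_eq_sum_subset {L : MvPolynomial (Fin d) ℂ} {S : Finset (Fin d →₀ ℕ)}
    (h : L.support ⊆ S) : diffOp L = ∑ α ∈ S, L.coeff α • Dop α := by
  rw [diffOp_def]
  exact Finset.sum_subset h fun x _ hx => by
    rw [MvPolynomial.notMem_support_iff.mp hx, zero_smul]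

lemma diffOp_add (A B : MvPolynomial (Fin d) ℂ) : diffOp (A + B) = diffOp A + diffOp B := by
  classical
  rw [diffOp_eq_sum_subset (MvPolynomial.support_add (p := A) (q := B)),
    diffOp_eq_sum_subset (Finset.subset_union_left (s₁ := A.support) (s₂ := B.support)),
    diffOp_eq_sum_subset (Finset.subset_union_right (s₁ := A.support) (s₂ := B.support)),
    ← Finset.sum_add_distrib]
  exact Finset.sum_congr rfl fun α _ => by rw [coeff_add, add_smul]

lemma diffOp_zero : diffOp (0 : MvPolynomial (Fin d) ℂ) = 0 := by
  rw [diffOp_def]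
  simp

lemma diffOp_monomial (δ : Fin d →₀ ℕ) (c : ℂ) :
    diffOp (monomial δ c) = c • Dop δ := by
  classical
  rw [diffOp_def]
  rcases eq_or_ne c 0 with rfl | hc
  · simp [support_monomial]
  · rw [support_monomial, if_neg hc, Finset.sum_singleton, coeff_monomial, if_pos rfl]

lemma conjPoly_add (F G : MvPolynomial (Fin d) ℂ) :
    conjPoly (F + G) = conjPoly F + conjPoly G := map_add _ _ _

lemma conjPoly_zero : conjPoly (0 : MvPolynomial (Fin d) ℂ) = 0 := map_zero _

lemma coeff_conjPoly (F : MvPolynomial (Fin d) ℂ) (α : Fin d →₀ ℕ) :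
    coeff α (conjPoly F) = (starRingEnd ℂ) (coeff α F) := coeff_map _ _ _

lemma support_conjPoly (F : MvPolynomial (Fin d) ℂ) : (conjPoly F).support = F.support := by
  ext α
  rw [MvPolynomial.mem_support_iff, MvPolynomial.mem_support_iff, coeff_conjPoly]
  exact not_congr (by rw [starRingEnd_apply, star_eq_zero])

lemma conjPoly_isHomogeneous {F : MvPolynomial (Fin d) ℂ} {n : ℕ} (h : F.IsHomogeneous n) :
    (conjPoly F).IsHomogeneous n := by
  intro e he
  refine h ?_
  rw [coeff_conjPoly, starRingEnd_apply, star_ne_zero] at he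
  exact he

/-- The product of factorials. -/
def ffact (α : Fin d →₀ ℕ) : ℕ := ∏ j, (α j).factorial

lemma ffact_pos (α : Fin d →₀ ℕ) : 0 < ffact α :=
  Finset.prod_pos fun j _ => Nat.factorial_pos _

lemma ffact_add (β δ : Fin d →₀ ℕ) :
    ffact (β + δ) = ffact β * ∏ j, (β j + δ j).descFactorial (δ j) := by
  rw [ffact, ffact, ← Finset.prod_mul_distrib]
  exact Finset.prod_congr rfl fun j _ => by
    rw [Finsupp.add_apply, nat_fact_desc]

/-- The Fischer pairing's scalar value. -/
noncomputable def Bf (f F : MvPolynomial (Fin d) ℂ) : ℂ := coeff 0 (fischer f F)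

lemma Bf_eq_sum (f F : MvPolynomial (Fin d) ℂ) :
    Bf f F = ∑ α ∈ F.support, (starRingEnd ℂ) (coeff α F) * coeff α f * (ffact α : ℕ) := by
  rw [Bf, fischer, coeff_diffOp, support_conjPoly]
  refine Finset.sum_congr rfl fun α _ => ?_
  simp only [coeff_conjPoly, zero_add, Finsupp.coe_zero, Pi.zero_apply,
    Nat.descFactorial_self]
  rw [ffact]
  ring

lemma Bf_monomial (δ : Fin d →₀ ℕ) (e : ℂ) (F : MvPolynomial (Fin d) ℂ) :
    Bf (monomial δ e) F = (starRingEnd ℂ) (coeff δ F) * e * (ffact δ : ℕ) := by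
  classical
  rw [Bf_eq_sum, Finset.sum_eq_single δ]
  · rw [coeff_monomial, if_pos rfl]
  · intro b _ hb
    rw [coeff_monomial, if_neg (fun h => hb h.symm)]
    simp
  · intro hδ
    rw [MvPolynomial.notMem_support_iff.mp hδ, map_zero, zero_mul, zero_mul]

lemma Bf_add_left (f g F : MvPolynomial (Fin d) ℂ) : Bf (f + g) F = Bf f F + Bf g F := by
  simp [Bf, fischer, map_add, coeff_add]

lemma Bf_zero_left (F : MvPolynomial (Fin d) ℂ) : Bf 0 F = 0 := by
  simp [Bf, fischer]

lemma Bf_add_right (f F G : MvPolynomial (Fin d) ℂ) : Bf f (F + G) = Bf f F + Bf f G := by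
  rw [Bf, Bf, Bf, fischer, fischer, fischer, conjPoly_add, diffOp_add, LinearMap.add_apply,
    coeff_add]

lemma Bf_zero_right (f : MvPolynomial (Fin d) ℂ) : Bf f 0 = 0 := by
  rw [Bf, fischer, conjPoly_zero, diffOp_zero]
  simp

lemma Bf_adjoint (F L p : MvPolynomial (Fin d) ℂ) :
    Bf (L * p) F = Bf p (diffOp (conjPoly L) F) := by
  induction L using MvPolynomial.induction_on' generalizing p with
  | add L₁ L₂ hL₁ hL₂ =>
    rw [add_mul, Bf_add_left, hL₁, hL₂, conjPoly_add, diffOp_add, LinearMap.add_apply,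
      Bf_add_right]
  | monomial δ c =>
    induction p using MvPolynomial.induction_on' with
    | add p₁ p₂ hp₁ hp₂ => rw [mul_add, Bf_add_left, hp₁, hp₂, Bf_add_left]
    | monomial β e =>
      rw [monomial_mul, Bf_monomial, Bf_monomial]
      have hconj : conjPoly (monomial δ c) = monomial δ ((starRingEnd ℂ) c) := by
        rw [conjPoly, map_monomial]
      rw [hconj, diffOp_monomial, LinearMap.smul_apply, coeff_smul, coeff_Dop]
      rw [show δ + β = β + δ from add_comm δ β, ffact_add β δ]
      simp only [smul_eq_mul, map_mul, Complex.conj_conj, map_natCast]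
      push_cast
      ring

lemma Bf_self_eq_zero {f : MvPolynomial (Fin d) ℂ} (h : Bf f f = 0) : f = 0 := by
  classical
  have hsum : ((∑ α ∈ f.support, Complex.normSq (coeff α f) * (ffact α : ℝ) : ℝ) : ℂ) = 0 := by
    rw [← h, Bf_eq_sum]
    push_cast
    refine Finset.sum_congr rfl fun α _ => ?_
    rw [Complex.normSq_eq_conj_mul_self]
  have hsum' : (∑ α ∈ f.support, Complex.normSq (coeff α f) * (ffact α : ℝ)) = 0 := by
    exact_mod_cast hsum
  have key : ∀ α ∈ f.support, Complex.normSq (coeff α f) * (ffact α : ℝ) = 0 :=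
    (Finset.sum_eq_zero_iff_of_nonneg fun α _ =>
      mul_nonneg (Complex.normSq_nonneg _) (by positivity)).mp hsum'
  apply MvPolynomial.ext
  intro m
  rw [coeff_zero]
  by_cases hm : m ∈ f.support
  · have h0 := key m hm
    have hff : (ffact m : ℝ) ≠ 0 := by
      exact_mod_cast (ffact_pos m).ne'
    have : Complex.normSq (coeff m f) = 0 := by
      rcases mul_eq_zero.mp h0 with h' | h'
      · exact h'
      · exact absurd h' hff
    exact Complex.normSq_eq_zero.mp this
  · exact MvPolynomial.notMem_support_iff.mp hm

lemma finsupp_degree_add (u v : Fin d →₀ ℕ) : (u + v).degree = u.degree + v.degree := by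
  simp [Finsupp.degree_eq_weight_one, map_add]

lemma isHomog_coeff {P : MvPolynomial (Fin d) ℂ} {n : ℕ} (h : P.IsHomogeneous n)
    {e : Fin d →₀ ℕ} (he : coeff e P ≠ 0) : e.degree = n := by
  rw [Finsupp.degree_eq_weight_one]
  exact h he

lemma isHomog_of_coeff {P : MvPolynomial (Fin d) ℂ} {n : ℕ}
    (h : ∀ e : Fin d →₀ ℕ, coeff e P ≠ 0 → e.degree = n) : P.IsHomogeneous n := by
  intro e he
  have := h e he
  rw [Finsupp.degree_eq_weight_one] at this
  exact this

lemma degree_eq_of_coeff_diffOp_ne_zero {L f : MvPolynomial (Fin d) ℂ} {l k : ℕ}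
    (hL : L.IsHomogeneous l) (hf : f.IsHomogeneous k) {β : Fin d →₀ ℕ}
    (h : coeff β (diffOp L f) ≠ 0) : β.degree + l = k := by
  rw [coeff_diffOp] at h
  obtain ⟨α, _, hα⟩ := Finset.exists_ne_zero_of_sum_ne_zero h
  have h1 : coeff α L ≠ 0 := fun h0 => hα (by rw [h0, zero_mul])
  have h2 : coeff (β + α) f ≠ 0 := fun h0 => hα (by rw [h0, zero_mul, mul_zero])
  have h3 := isHomog_coeff hf h2
  rw [finsupp_degree_add, isHomog_coeff hL h1] at h3
  exact h3

lemma diffOp_isHomogeneous {L f : MvPolynomial (Fin d) ℂ} {l k : ℕ}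
    (hL : L.IsHomogeneous l) (hf : f.IsHomogeneous k) :
    (diffOp L f).IsHomogeneous (k - l) :=
  isHomog_of_coeff fun e he => by
    have := degree_eq_of_coeff_diffOp_ne_zero hL hf he
    omega

lemma diffOp_eq_zero_of_lt {L f : MvPolynomial (Fin d) ℂ} {l k : ℕ}
    (hL : L.IsHomogeneous l) (hf : f.IsHomogeneous k) (hkl : k < l) :
    diffOp L f = 0 := by
  apply MvPolynomial.ext
  intro m
  rw [coeff_zero]
  by_contra h
  have := degree_eq_of_coeff_diffOp_ne_zero hL hf h
  omega

lemma eq_zero_of_homog_zero {P : MvPolynomial (Fin d) ℂ} (h : P.IsHomogeneous 0)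
    (h0 : coeff 0 P = 0) : P = 0 := by
  apply MvPolynomial.ext
  intro m
  rw [coeff_zero]
  rcases eq_or_ne m 0 with rfl | hm
  · exact h0
  · by_contra hc
    exact hm ((Finsupp.degree_eq_zero_iff m).mp (isHomog_coeff h hc))

lemma hc_totalDegree_ne_zero {f : MvPolynomial (Fin d) ℂ} (hf : f ≠ 0) :
    homogeneousComponent f.totalDegree f ≠ 0 := by
  obtain ⟨α, hαs, hα⟩ := Finset.exists_mem_eq_sup f.support
    (MvPolynomial.support_nonempty.mpr hf) fun s => s.sum fun _ e => e
  intro h0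
  have hcoeff : coeff α (homogeneousComponent f.totalDegree f) = coeff α f := by
    rw [coeff_homogeneousComponent, if_pos]
    rw [totalDegree, hα]
    rfl
  rw [h0, coeff_zero] at hcoeff
  exact MvPolynomial.mem_support_iff.mp hαs hcoeff.symm

lemma hc_mul (a b : MvPolynomial (Fin d) ℂ) :
    homogeneousComponent (a.totalDegree + b.totalDegree) (a * b) =
      homogeneousComponent a.totalDegree a * homogeneousComponent b.totalDegree b := by
  classical
  apply MvPolynomial.ext
  intro δ
  rw [coeff_homogeneousComponent]
  by_cases hδ : δ.degree = a.totalDegree + b.totalDegree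
  · rw [if_pos hδ, coeff_mul, coeff_mul]
    refine Finset.sum_congr rfl ?_
    rintro ⟨u, v⟩ huv
    rw [Finset.HasAntidiagonal.mem_antidiagonal] at huv
    have hdeg : u.degree + v.degree = a.totalDegree + b.totalDegree := by
      rw [← finsupp_degree_add, huv, hδ]
    simp only [coeff_homogeneousComponent]
    by_cases hu : u.degree = a.totalDegree
    · rw [if_pos hu, if_pos (by omega)]
    · rcases lt_or_gt_of_ne hu with hlt | hgt
      · have hv : b.totalDegree < v.degree := by omega
        rw [coeff_eq_zero_of_totalDegree_lt hv, if_neg hu, zero_mul, mul_zero]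
      · rw [coeff_eq_zero_of_totalDegree_lt hgt, if_neg hu, zero_mul, zero_mul]
  · rw [if_neg hδ]
    have hhom := (homogeneousComponent_isHomogeneous a.totalDegree a).mul
      (homogeneousComponent_isHomogeneous b.totalDegree b)
    exact (hhom.coeff_eq_zero hδ).symm

lemma leading_mul (a b : MvPolynomial (Fin d) ℂ) (ha : a ≠ 0) (hb : b ≠ 0) :
    homogeneousComponent (a * b).totalDegree (a * b) =
      homogeneousComponent a.totalDegree a * homogeneousComponent b.totalDegree b ∧
    (a * b).totalDegree = a.totalDegree + b.totalDegree := by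
  have hne : homogeneousComponent a.totalDegree a * homogeneousComponent b.totalDegree b ≠ 0 :=
    mul_ne_zero (hc_totalDegree_ne_zero ha) (hc_totalDegree_ne_zero hb)
  have hd : (a * b).totalDegree = a.totalDegree + b.totalDegree := by
    refine le_antisymm (totalDegree_mul a b) ?_
    by_contra hlt
    push_neg at hlt
    have hz := homogeneousComponent_eq_zero _ (a * b) hlt
    rw [hc_mul] at hz
    exact hne hz
  exact ⟨by rw [hd, hc_mul], hd⟩

instance homog_findim (n : ℕ) :
    FiniteDimensional ℂ ↥(homogeneousSubmodule (Fin d) ℂ n) := by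
  have hle : homogeneousSubmodule (Fin d) ℂ n ≤ restrictTotalDegree (Fin d) ℂ n := by
    intro p hp
    rw [mem_restrictTotalDegree]
    exact ((mem_homogeneousSubmodule _ _).mp hp).totalDegree_le
  exact Submodule.finiteDimensional_of_le hle

end FischerAux

open FischerAux

theorem fischer_orthocomplement_eq_kernel {d l : ℕ} (L : MvPolynomial (Fin d) ℂ)
    (hL0 : L ≠ 0) (hL : L.IsHomogeneous l)
    (q : MvPolynomial (Fin d) ℂ) (hq : homogeneousComponent q.totalDegree q = L) :
    (∀ k : ℕ,
      {F : MvPolynomial (Fin d) ℂ | F ∈ homogeneousSubmodule (Fin d) ℂ k ∧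
          ∀ f : MvPolynomial (Fin d) ℂ,
            (∃ g ∈ Ideal.span {q}, homogeneousComponent g.totalDegree g = f) →
            f ∈ homogeneousSubmodule (Fin d) ℂ k → fischer f F = 0} =
        {F : MvPolynomial (Fin d) ℂ | F ∈ LinearMap.ker (diffOp (conjPoly L)) ∧
          F ∈ homogeneousSubmodule (Fin d) ℂ k}) ∧
    (∀ k : ℕ, l ≤ k →
      Module.finrank ℂ
          ↥(LinearMap.ker (diffOp (conjPoly L)) ⊓ homogeneousSubmodule (Fin d) ℂ k) =
        Module.finrank ℂ ↥(homogeneousSubmodule (Fin d) ℂ k) -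
          Module.finrank ℂ ↥(homogeneousSubmodule (Fin d) ℂ (k - l))) := by
  classical
  have hq0 : q ≠ 0 := by
    rintro rfl
    rw [map_zero] at hq
    exact hL0 hq.symm
  have hcL : (conjPoly L).IsHomogeneous l := conjPoly_isHomogeneous hL
  -- key: orthogonality implies kernel membership
  have key1 : ∀ (k : ℕ) (F : MvPolynomial (Fin d) ℂ), F.IsHomogeneous k →
      (∀ f : MvPolynomial (Fin d) ℂ,
        (∃ g ∈ Ideal.span {q}, homogeneousComponent g.totalDegree g = f) →
        f ∈ homogeneousSubmodule (Fin d) ℂ k → fischer f F = 0) →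
      diffOp (conjPoly L) F = 0 := by
    intro k F hFk horth
    by_cases hkl : l ≤ k
    · set G := diffOp (conjPoly L) F with hG
      have hGhom : G.IsHomogeneous (k - l) := diffOp_isHomogeneous hcL hFk
      by_cases hG0 : G = 0
      · exact hG0
      · exfalso
        have hGd : G.totalDegree = k - l := hGhom.totalDegree hG0
        obtain ⟨hlead, hdeg⟩ := leading_mul q G hq0 hG0
        have hhcG : homogeneousComponent G.totalDegree G = G := by
          rw [hGd, homogeneousComponent_of_mem
            ((mem_homogeneousSubmodule _ _).mpr hGhom), if_pos rfl]
        have hf : homogeneousComponent (q * G).totalDegree (q * G) = L * G := by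
          rw [hlead, hq, hhcG]
        have hmem : L * G ∈ homogeneousSubmodule (Fin d) ℂ k := by
          rw [mem_homogeneousSubmodule]
          have hmul := hL.mul hGhom
          rwa [show l + (k - l) = k by omega] at hmul
        have h0 : fischer (L * G) F = 0 :=
          horth _ ⟨q * G, Ideal.mem_span_singleton.mpr ⟨G, rfl⟩, hf⟩ hmem
        have hB : Bf (L * G) F = 0 := by rw [Bf, h0, coeff_zero]
        rw [Bf_adjoint] at hB
        rw [← hG] at hB
        exact hG0 (Bf_self_eq_zero hB)
    · exact diffOp_eq_zero_of_lt hcL hFk (by omega)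
  constructor
  · intro k
    ext F
    simp only [Set.mem_setOf_eq]
    constructor
    · rintro ⟨hFk, horth⟩
      exact ⟨LinearMap.mem_ker.mpr
        (key1 k F ((mem_homogeneousSubmodule _ _).mp hFk) horth), hFk⟩
    · rintro ⟨hker, hFk⟩
      refine ⟨hFk, ?_⟩
      rintro f ⟨g, hgspan, hglead⟩ hfk
      have hFhom : F.IsHomogeneous k := (mem_homogeneousSubmodule _ _).mp hFk
      have hfhom : f.IsHomogeneous k := (mem_homogeneousSubmodule _ _).mp hfk
      have hhom0 : (fischer f F).IsHomogeneous 0 := by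
        have := diffOp_isHomogeneous (conjPoly_isHomogeneous hFhom) hfhom
        rwa [Nat.sub_self] at this
      refine eq_zero_of_homog_zero hhom0 ?_
      show Bf f F = 0
      by_cases hg0 : g = 0
      · subst hg0
        have hf0 : f = 0 := by
          rw [← hglead, map_zero]
        rw [hf0, Bf_zero_left]
      · obtain ⟨h, rfl⟩ := Ideal.mem_span_singleton.mp hgspan
        have hh0 : h ≠ 0 := fun h0 => hg0 (by rw [h0, mul_zero])
        obtain ⟨hlead, hdeg⟩ := leading_mul q h hq0 hh0
        have hfLp : f = L * homogeneousComponent h.totalDegree h := by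
          rw [← hglead, hlead, hq]
        rw [hfLp, Bf_adjoint, LinearMap.mem_ker.mp hker, Bf_zero_right]
  · intro k hlk
    set Hk := homogeneousSubmodule (Fin d) ℂ k with hHk
    set Hm := homogeneousSubmodule (Fin d) ℂ (k - l) with hHm
    have hmapT : ∀ x ∈ Hk, diffOp (conjPoly L) x ∈ Hm := fun x hx =>
      (mem_homogeneousSubmodule _ _).mpr
        (diffOp_isHomogeneous hcL ((mem_homogeneousSubmodule _ _).mp hx))
    set T : ↥Hk →ₗ[ℂ] ↥Hm := (diffOp (conjPoly L)).restrict hmapT with hT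
    have hmapM : ∀ x ∈ Hm, (LinearMap.mulLeft ℂ L) x ∈ Hk := by
      intro x hx
      rw [LinearMap.mulLeft_apply, hHk, mem_homogeneousSubmodule]
      have hmul := hL.mul ((mem_homogeneousSubmodule _ _).mp hx)
      rwa [show l + (k - l) = k by omega] at hmul
    set Mu : ↥Hm →ₗ[ℂ] ↥Hk := (LinearMap.mulLeft ℂ L).restrict hmapM with hMu
    have hMinj : Function.Injective (T ∘ₗ Mu) := by
      rw [← LinearMap.ker_eq_bot, Submodule.eq_bot_iff]
      intro p hp
      rw [LinearMap.mem_ker] at hp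
      have hval : diffOp (conjPoly L) (L * (p : MvPolynomial (Fin d) ℂ)) = 0 := by
        have hcongr := congrArg Subtype.val hp
        simpa [T, Mu, LinearMap.restrict_coe_apply] using hcongr
      have hB : Bf (L * (p : MvPolynomial (Fin d) ℂ)) (L * (p : MvPolynomial (Fin d) ℂ)) = 0 := by
        rw [Bf_adjoint, hval, Bf_zero_right]
      have hLp : L * (p : MvPolynomial (Fin d) ℂ) = 0 := Bf_self_eq_zero hB
      have hp0 : (p : MvPolynomial (Fin d) ℂ) = 0 := by
        rcases mul_eq_zero.mp hLp with h' | h'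
        · exact absurd h' hL0
        · exact h'
      exact Subtype.ext hp0
    have hMsurj : Function.Surjective (T ∘ₗ Mu) := LinearMap.injective_iff_surjective.mp hMinj
    have hTsurj : Function.Surjective T := by
      intro y
      obtain ⟨x, hx⟩ := hMsurj y
      exact ⟨Mu x, hx⟩
    have hrank := LinearMap.finrank_range_add_finrank_ker T
    rw [LinearMap.range_eq_top.mpr hTsurj, finrank_top] at hrank
    have hkerT : LinearMap.ker T =
        Submodule.comap Hk.subtype (LinearMap.ker (diffOp (conjPoly L)) ⊓ Hk) := by
      ext x
      constructor
      · intro hx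
        rw [LinearMap.mem_ker] at hx
        refine Submodule.mem_comap.mpr (Submodule.mem_inf.mpr ⟨?_, x.2⟩)
        rw [LinearMap.mem_ker]
        have hcongr := congrArg Subtype.val hx
        simpa [T, LinearMap.restrict_coe_apply] using hcongr
      · intro hx
        obtain ⟨h1, _⟩ := Submodule.mem_inf.mp (Submodule.mem_comap.mp hx)
        rw [LinearMap.mem_ker]
        apply Subtype.ext
        simpa [T, LinearMap.restrict_coe_apply] using LinearMap.mem_ker.mp h1
    have hfr : Module.finrank ℂ ↥(LinearMap.ker (diffOp (conjPoly L)) ⊓ Hk) =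
        Module.finrank ℂ ↥(LinearMap.ker T) := by
      rw [hkerT]
      exact (Submodule.comapSubtypeEquivOfLe inf_le_right).finrank_eq.symm
    rw [hfr]
    omega
end
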